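/- Let (X_α)_{α ∈ A} be a family of locally compact Hausdorff topological spaces and let Y be a regular topological space. Endow X := ∏_{α ∈ A} X_α with the product topology, and let f : X → Y be a map such that the restriction f|_K is continuous for every compact subset K ⊆ X. Then f is continuous. -/
import Mathlib

open Set Filter Topology

section NobleAux

variable {A : Type*} {X : A → Type*} [∀ α, TopologicalSpace (X α)]
    [∀ α, T2Space (X α)] [∀ α, LocallyCompactSpace (X α)]
    {Y : Type*} [TopologicalSpace Y]

/-- Shrinking lemma in a locally compact Hausdorff space. -/
private lemma noble_shrink {Z : Type*} [TopologicalSpace Z] [T2Space Z] [LocallyCompactSpace Z]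
    {a : Z} {T : Set Z} (hT : T ∈ 𝓝 a) :
    ∃ U : Set Z, IsOpen U ∧ a ∈ U ∧ closure U ⊆ T := by
  obtain ⟨s, hs, hsT, hsc⟩ := local_compact_nhds hT
  exact ⟨interior s, isOpen_interior, mem_interior_iff_mem_nhds.2 hs,
    (closure_minimal interior_subset hsc.isClosed).trans hsT⟩

/-- The inductive step of Noble's construction. -/
private lemma noble_step {f : (∀ α, X α) → Y}
    (hf : ∀ K : Set (∀ α, X α), IsCompact K → ContinuousOn f K)
    {x : ∀ α, X α} {V : Set Y} (hVc : IsClosed V) (hnV : f ⁻¹' V ∉ 𝓝 x)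
    (K : ∀ α, Set (X α)) (hKn : ∀ α, K α ∈ 𝓝 (x α))
    (F : Finset A) (U : ∀ α, Set (X α))
    (hUo : ∀ α, IsOpen (U α)) (hUx : ∀ α, x α ∈ U α) :
    ∃ (F' : Finset A) (U' : ∀ α, Set (X α)) (z : ∀ α, X α),
      F ⊆ F' ∧ (∀ α, IsOpen (U' α)) ∧ (∀ α, x α ∈ U' α) ∧
      (∀ α, closure (U' α) ⊆ interior (K α)) ∧
      (∀ α ∈ F, closure (U' α) ⊆ U α) ∧
      f z ∉ V ∧ (∀ α ∈ F, z α ∈ U α) ∧ (∀ α ∉ F', z α = x α) := by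
  classical
  -- pick a bad point z₀ in the basic neighbourhood determined by (F, U)
  have hN : (↑F : Set A).pi U ∈ 𝓝 x :=
    set_pi_mem_nhds F.finite_toSet fun α _ => (hUo α).mem_nhds (hUx α)
  have hz0 : ∃ z0 ∈ (↑F : Set A).pi U, f z0 ∉ V := by
    by_contra h
    push_neg at h
    exact hnV (mem_of_superset hN h)
  obtain ⟨z0, hz0N, hz0V⟩ := hz0
  -- the doubleton compact set
  set D : Set (∀ α, X α) := Set.pi univ (fun α => ({x α, z0 α} : Set (X α))) with hD
  have hDc : IsCompact D :=
    isCompact_univ_pi fun α => ((finite_singleton (z0 α)).insert (x α)).isCompact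
  have hz0D : z0 ∈ D := fun α _ => Or.inr rfl
  have hcw : ContinuousWithinAt f D z0 := hf D hDc z0 hz0D
  have hVc' : (Vᶜ : Set Y) ∈ 𝓝 (f z0) := hVc.isOpen_compl.mem_nhds hz0V
  obtain ⟨t, hto, hz0t, htsub⟩ := mem_nhdsWithin.1 (hcw hVc')
  obtain ⟨G, u, hGu, hGt⟩ := isOpen_pi_iff.1 hto z0 hz0t
  -- the trimmed bad point
  set z : ∀ α, X α := fun α => if α ∈ F ∪ G then z0 α else x α with hzdef
  have hzD : z ∈ D := by
    intro α _
    simp only [hzdef]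
    split_ifs with h
    · exact Set.mem_insert_of_mem _ rfl
    · exact Set.mem_insert _ _
  have hzV : f z ∉ V := by
    refine htsub ⟨hGt ?_, hzD⟩
    intro α hα
    have h : α ∈ F ∪ G := Finset.mem_union_right _ hα
    show (if α ∈ F ∪ G then z0 α else x α) ∈ u α
    rw [if_pos h]
    exact (hGu α hα).2
  -- the new opens
  have hT : ∀ α, ∃ W, IsOpen W ∧ x α ∈ W ∧
      closure W ⊆ interior (K α) ∩ (if α ∈ F then U α else univ) := by
    intro α
    apply noble_shrink
    refine inter_mem (interior_mem_nhds.2 (hKn α)) ?_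
    split_ifs with h
    · exact (hUo α).mem_nhds (hUx α)
    · exact univ_mem
  choose U' hU'o hU'x hU'cl using hT
  refine ⟨F ∪ G, U', z, Finset.subset_union_left, hU'o, hU'x,
    fun α => (hU'cl α).trans inter_subset_left, ?_, hzV, ?_, ?_⟩
  · intro α hα
    have := (hU'cl α).trans inter_subset_right
    simpa [hα] using this
  · intro α hα
    have h : α ∈ F ∪ G := Finset.mem_union_left _ hα
    show (if α ∈ F ∪ G then z0 α else x α) ∈ U α
    rw [if_pos h]
    exact hz0N α hα
  · intro α hα
    show (if α ∈ F ∪ G then z0 α else x α) = x α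
    rw [if_neg hα]

end NobleAux

theorem product_of_locally_compact_hausdorff_map_to_regular
    {A : Type*} {X : A → Type*} [∀ α, TopologicalSpace (X α)]
    [∀ α, T2Space (X α)] [∀ α, LocallyCompactSpace (X α)]
    {Y : Type*} [TopologicalSpace Y] [RegularSpace Y]
    (f : (∀ α, X α) → Y)
    (hf : ∀ K : Set (∀ α, X α), IsCompact K → ContinuousOn f K) :
    Continuous f := by
  classical
  rw [continuous_iff_continuousAt]
  intro x
  rw [ContinuousAt, (closed_nhds_basis (f x)).tendsto_right_iff]
  rintro V ⟨hV, hVc⟩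
  by_contra hc
  have hnV : f ⁻¹' V ∉ 𝓝 x := hc
  -- fixed compact neighbourhoods of the coordinates of x
  have hKex : ∀ α, ∃ s : Set (X α), IsCompact s ∧ s ∈ 𝓝 (x α) := fun α =>
    exists_compact_mem_nhds (x α)
  choose K hKc hKn using hKex
  -- the guarantee coming from continuity on the compact box ∏ K α at x
  have hSig0 : IsCompact (Set.pi univ K) := isCompact_univ_pi hKc
  have hx0 : x ∈ Set.pi univ K := fun α _ => mem_of_mem_nhds (hKn α)
  have hiV : interior V ∈ 𝓝 (f x) := interior_mem_nhds.2 hV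
  obtain ⟨t, hto, hxt, htsub⟩ := mem_nhdsWithin.1 ((hf _ hSig0 x hx0) hiV)
  obtain ⟨G0, P, hG0P, hPt⟩ := isOpen_pi_iff.1 hto x hxt
  have hO : ∀ w ∈ Set.pi univ K, (∀ α ∈ G0, w α ∈ P α) → f w ∈ interior V := by
    intro w hw hwP
    exact htsub ⟨hPt fun α hα => hwP α hα, hw⟩
  -- the state type for the recursive construction
  let St := {p : Finset A × (∀ α, Set (X α)) //
      (∀ α, IsOpen (p.2 α)) ∧ (∀ α, x α ∈ p.2 α) ∧
      (∀ α, closure (p.2 α) ⊆ interior (K α))}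
  -- initial state
  have hT0 : ∀ α, ∃ W, IsOpen W ∧ x α ∈ W ∧
      closure W ⊆ interior (K α) ∩ (if α ∈ G0 then P α else univ) := by
    intro α
    apply noble_shrink
    refine inter_mem (interior_mem_nhds.2 (hKn α)) ?_
    split_ifs with h
    · exact ((hG0P α h).1).mem_nhds (hG0P α h).2
    · exact univ_mem
  choose U0 hU0o hU0x hU0cl using hT0
  let s0 : St := ⟨(G0, U0), hU0o, hU0x, fun α => (hU0cl α).trans inter_subset_left⟩
  have hU0P : ∀ α ∈ G0, closure (U0 α) ⊆ P α := by
    intro α hα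
    have := (hU0cl α).trans inter_subset_right
    simpa [hα] using this
  -- the step function
  have hstep : ∀ s : St, ∃ (s' : St) (z : ∀ α, X α),
      s.1.1 ⊆ s'.1.1 ∧ (∀ α ∈ s.1.1, closure (s'.1.2 α) ⊆ s.1.2 α) ∧
      f z ∉ V ∧ (∀ α ∈ s.1.1, z α ∈ s.1.2 α) ∧ (∀ α ∉ s'.1.1, z α = x α) := by
    rintro ⟨⟨F, U⟩, hUo, hUx, -⟩
    obtain ⟨F', U', z, h1, h2, h3, h4, h5, h6, h7, h8⟩ :=
      noble_step hf hVc hnV K hKn F U hUo hUx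
    exact ⟨⟨(F', U'), h2, h3, h4⟩, z, h1, h5, h6, h7, h8⟩
  choose nxt zf hmono hnest hzV hzU hzx using hstep
  -- the sequence of states and bad points
  let S : ℕ → St := fun n => nxt^[n] s0
  let Fn : ℕ → Finset A := fun n => (S n).1.1
  let Un : ℕ → ∀ α, Set (X α) := fun n => (S n).1.2
  let z : ℕ → ∀ α, X α := fun n => zf (S n)
  have hSsucc : ∀ n, S (n + 1) = nxt (S n) := fun n => Function.iterate_succ_apply' nxt n s0
  have hFmono : ∀ {n m}, n ≤ m → Fn n ⊆ Fn m := by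
    intro n m h
    induction m, h using Nat.le_induction with
    | base => exact Finset.Subset.refl _
    | succ m hm ih =>
        refine ih.trans ?_
        show Fn m ⊆ Fn (m + 1)
        simp only [Fn, hSsucc]
        exact hmono (S m)
  have hUnest : ∀ {n m} (α), n ≤ m → α ∈ Fn n → Un m α ⊆ Un n α := by
    intro n m α h hα
    induction m, h using Nat.le_induction with
    | base => exact subset_rfl
    | succ m hm ih =>
        refine subset_trans ?_ ih
        have : closure (Un (m+1) α) ⊆ Un m α := by
          simp only [Un, Fn, hSsucc]
          exact hnest (S m) α (hFmono hm hα)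
        exact subset_closure.trans this
  have hztail : ∀ {n m} (α), n ≤ m → α ∈ Fn n → z m α ∈ Un n α :=
    fun {n m} α h hα => hUnest α h hα (hzU (S m) α (hFmono h hα))
  have hzxx : ∀ m α, α ∉ Fn (m + 1) → z m α = x α := by
    intro m α hα
    refine hzx (S m) α ?_
    simpa only [Fn, hSsucc] using hα
  have hzK : ∀ m α, α ∈ Fn m ∨ α ∉ Fn (m + 1) → z m α ∈ K α := by
    rintro m α (h | h)
    · exact interior_subset ((S m).2.2.2 α (subset_closure (hzU (S m) α h)))
    · rw [hzxx m α h]; exact mem_of_mem_nhds (hKn α)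
  -- the limit compact box
  have hbad : ∀ α, {m : ℕ | α ∉ Fn m ∧ α ∈ Fn (m + 1)}.Subsingleton := by
    intro α m1 hm1 m2 hm2
    by_contra hne
    rcases Nat.lt_or_ge m1 m2 with h | h
    · exact hm2.1 (hFmono h hm1.2)
    · have h' : m2 < m1 := lt_of_le_of_ne h (Ne.symm hne)
      exact hm1.1 (hFmono h' hm2.2)
  let L : ∀ α, Set (X α) := fun α => K α ∪ Set.range (fun m => z m α)
  have hLc : ∀ α, IsCompact (L α) := by
    intro α
    have hsub : Set.range (fun m => z m α) \ K α ⊆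
        (fun m => z m α) '' {m : ℕ | α ∉ Fn m ∧ α ∈ Fn (m + 1)} := by
      rintro y ⟨⟨m, rfl⟩, hy⟩
      refine ⟨m, ?_, rfl⟩
      by_contra h
      rw [Set.mem_setOf_eq, not_and_or, not_not] at h
      exact hy (hzK m α (h.imp id id))
    have hfin : (Set.range (fun m => z m α) \ K α).Finite :=
      (((hbad α).finite).image _).subset hsub
    have : L α = K α ∪ (Set.range (fun m => z m α) \ K α) := by
      rw [Set.union_diff_self]
    rw [this]
    exact (hKc α).union hfin.isCompact
  have hSigc : IsCompact (Set.pi univ L) := isCompact_univ_pi hLc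
  have hzL : ∀ m, z m ∈ Set.pi univ L := fun m α _ => Or.inr ⟨m, rfl⟩
  have hFl : Filter.map z atTop ≤ 𝓟 (Set.pi univ L) :=
    le_principal_iff.2 (mem_map.2 (univ_mem' hzL))
  obtain ⟨zs, hzsL, hcl⟩ := hSigc.exists_clusterPt hFl
  -- projections of the cluster point
  have hproj : ∀ (α : A) (T : Set (X α)), (∀ᶠ m in atTop, z m α ∈ T) →
      zs α ∈ closure T := by
    intro α T hT
    have hnb : (𝓝 zs ⊓ Filter.map z atTop).NeBot := hcl
    haveI := hnb.map (fun w : ∀ β, X β => w α)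
    have h1 : Filter.map (fun w : ∀ β, X β => w α) (𝓝 zs ⊓ Filter.map z atTop) ≤
        𝓝 (zs α) ⊓ 𝓟 T := by
      refine le_inf ?_ ?_
      · exact ((continuous_apply α).continuousAt).mono_left inf_le_left
      · calc Filter.map (fun w : ∀ β, X β => w α) (𝓝 zs ⊓ Filter.map z atTop)
            ≤ Filter.map (fun w : ∀ β, X β => w α) (Filter.map z atTop) :=
              map_mono inf_le_right
          _ = Filter.map (fun m => z m α) atTop := map_map
          _ ≤ 𝓟 T := le_principal_iff.2 (mem_map.2 hT)
    have h2 : (𝓝 (zs α) ⊓ 𝓟 T).NeBot := neBot_of_le h1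
    exact mem_closure_iff_clusterPt.2 h2
  -- Part 1: f zs ∉ interior V
  have hpart1 : f zs ∉ interior V := by
    have hnb : (𝓝 zs ⊓ Filter.map z atTop).NeBot := hcl
    haveI := hnb.map f
    have h1 : (𝓝 zs ⊓ Filter.map z atTop) ≤ 𝓝[Set.pi univ L] zs := by
      rw [nhdsWithin]
      exact inf_le_inf_left _ hFl
    have h2 : Filter.map f (𝓝 zs ⊓ Filter.map z atTop) ≤ 𝓝 (f zs) ⊓ 𝓟 Vᶜ := by
      refine le_inf ((hf _ hSigc zs hzsL).mono_left h1) ?_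
      calc Filter.map f (𝓝 zs ⊓ Filter.map z atTop)
          ≤ Filter.map f (Filter.map z atTop) := map_mono inf_le_right
        _ = Filter.map (fun m => f (z m)) atTop := map_map
        _ ≤ 𝓟 Vᶜ := le_principal_iff.2 (mem_map.2 (univ_mem'
            fun m => hzV (S m)))
    have h3 : (𝓝 (f zs) ⊓ 𝓟 Vᶜ).NeBot := neBot_of_le h2
    have h4 : f zs ∈ closure Vᶜ := mem_closure_iff_clusterPt.2 h3
    rw [closure_compl] at h4
    exact h4
  -- Part 2: f zs ∈ interior V
  have hclU : ∀ n α, α ∈ Fn n → zs α ∈ closure (Un n α) := by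
    intro n α hα
    refine hproj α (Un n α) ?_
    filter_upwards [eventually_ge_atTop n] with m hm
    exact hztail α hm hα
  have hzsK : zs ∈ Set.pi univ K := by
    intro α _
    by_cases hα : ∃ n, α ∈ Fn n
    · obtain ⟨n, hn⟩ := hα
      exact interior_subset ((closure_mono (hUnest α le_rfl hn)).trans
        ((S n).2.2.2 α) (hclU n α hn))
    · push_neg at hα
      have : ∀ᶠ m in atTop, z m α ∈ ({x α} : Set (X α)) := by
        filter_upwards [eventually_ge_atTop 0] with m _
        exact hzxx m α (hα (m + 1))
      have h := hproj α {x α} this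
      rw [closure_singleton] at h
      rw [h]
      exact mem_of_mem_nhds (hKn α)
  have hzsP : ∀ α ∈ G0, zs α ∈ P α := by
    intro α hα
    have hα0 : α ∈ Fn 0 := hα
    exact hU0P α hα (hclU 0 α hα0)
  exact hpart1 (hO zs hzsK hzsP)
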